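/- Let T be a spanning arborescence of G=(V,A) rooted at r that is precedence-feasible with respect to R (for every (s,t)∈R, t does not lie on the path from r to s in T). Then the indicator x of T satisfies, for every j ≠ r and every S ⊆ V_j∖{r} with j ∈ S, the inequality ∑_{(i,k)∈A : i∈V_j∖S, k∈S} x(i,k) ≥ 1, where V_j = {i ∈ V : (j,i) ∉ R}. -/

import Mathlib

def IsPathIn {V : Type*} (T : Set (V × V)) (r j : V) (p : List V) : Prop :=
  p.head? = some r ∧ p.getLast? = some j ∧ p.Chain' (fun a b => (a, b) ∈ T)

def IsSpanningArborescence {V : Type*} (T : Set (V × V)) (r : V) : Prop :=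
  (∀ j : V, j ≠ r → ∃! i : V, (i, j) ∈ T) ∧ (∀ i : V, (i, r) ∉ T) ∧
    ∀ j : V, ∃! p : List V, IsPathIn T r j p

lemma cross_lemma {V : Type*} (T : Set (V × V)) (S : Set V) :
    ∀ p : List V, p.Chain' (fun a b => (a, b) ∈ T) →
    ∀ r j : V, p.head? = some r → p.getLast? = some j → r ∉ S → j ∈ S →
    ∃ a b : V, (a, b) ∈ T ∧ a ∉ S ∧ b ∈ S ∧ a ∈ p := by
  intro p
  induction p with
  | nil => intro _ r j h; simp at h
  | cons x rest ih =>
    intro hch r j hhead hlast hrS hjS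
    simp at hhead; subst hhead
    cases rest with
    | nil =>
      simp at hlast; subst hlast; exact absurd hjS hrS
    | cons y rest' =>
      have hxy : (x, y) ∈ T := (List.isChain_cons_cons.mp hch).1
      have hch' : (y :: rest').Chain' (fun a b => (a, b) ∈ T) :=
        (List.isChain_cons_cons.mp hch).2
      by_cases hy : y ∈ S
      · exact ⟨x, y, hxy, hrS, hy, List.mem_cons_self⟩
      · have hlast' : (y :: rest').getLast? = some j := by
          rw [← hlast]; simp [List.getLast?_cons_cons]
        obtain ⟨a, b, h1, h2, h3, h4⟩ := ih hch' y j rfl hlast' hy hjS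
        exact ⟨a, b, h1, h2, h3, List.mem_cons_of_mem _ h4⟩

/-- the connectivity inequalities (3) of the Set-Based model are
valid for (the indicator of) every precedence-feasible spanning arborescence. -/
theorem stmt5 {V : Type*} [Fintype V] [DecidableEq V]
    (A T : Finset (V × V)) (R : Finset (V × V)) (r : V)
    (hT : T ⊆ A)
    (harb : IsSpanningArborescence (↑T) r)
    (hfeas : ∀ q ∈ R, ∀ p : List V, IsPathIn (↑T) r q.1 p → q.2 ∉ p) :
    ∀ j : V, j ≠ r → ∀ S : Finset V,
      S ⊆ (Finset.univ.filter (fun i => (j, i) ∉ R)).erase r → j ∈ S →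
      1 ≤ ∑ a ∈ A.filter (fun a =>
            a.1 ∈ Finset.univ.filter (fun i => (j, i) ∉ R) ∧ a.1 ∉ S ∧ a.2 ∈ S),
          (if a ∈ T then (1 : ℝ) else 0) := by
  intro j hj S hS hjS
  obtain ⟨p, hp, -⟩ := harb.2.2 j
  obtain ⟨hhead, hlast, hch⟩ := hp
  have hrS : r ∉ S := fun h => (Finset.mem_erase.mp (hS h)).1 rfl
  obtain ⟨a, b, habT, haS, hbS, hap⟩ :=
    cross_lemma (↑T) (↑S) p hch r j hhead hlast hrS hjS
  have haR : (j, a) ∉ R := by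
    intro hR
    exact hfeas (j, a) hR p ⟨hhead, hlast, hch⟩ hap
  have hmem : (a, b) ∈ A.filter (fun e =>
      e.1 ∈ Finset.univ.filter (fun i => (j, i) ∉ R) ∧ e.1 ∉ S ∧ e.2 ∈ S) := by
    simp only [Finset.mem_filter, Finset.mem_univ, true_and]
    exact ⟨hT habT, haR, haS, hbS⟩
  have := Finset.single_le_sum (f := fun e : V × V => if e ∈ T then (1 : ℝ) else 0)
    (fun e _ => by positivity) hmem
  have habT' : (a, b) ∈ T := habT
  simp only [if_pos habT'] at this
  exact this
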